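/- arXiv:math-ph/0304026 — 2 statements merged into one kernel-verified Lean document; each statement's English description precedes it below -/
import Mathlib

section
/- Let Q be the quadratic form Q(v) = −‖v‖² on Euclidean space ℝⁿ, and let (e₁, …, eₙ) and (f₁, …, fₙ) be two orthonormal bases of ℝⁿ whose change-of-basis matrix has determinant 1 (equivalently, which determine the same orientation). Then ι(e₁)·ι(e₂)·…·ι(eₙ) = ι(f₁)·ι(f₂)·…·ι(fₙ) in the Clifford algebra of Q; that is, the volume element of the Clifford algebra does not depend on the choice of positively oriented orthonormal basis. -/
open scoped RealInnerProductSpace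

open CliffordAlgebra in
/-- Contraction by a dual element vanishing on all factors kills the product. -/
private lemma aux_contract_prod {R M : Type*} [CommRing R] [AddCommGroup M] [Module R M]
    {Q : QuadraticForm R M} (d : Module.Dual R M) :
    ∀ {k : ℕ} (w : Fin k → M), (∀ i, d (w i) = 0) →
      contractLeft (Q := Q) d (List.ofFn fun i => ι Q (w i)).prod = 0
  | 0, w, hw => by
      simp
  | (k + 1), w, hw => by
      rw [List.ofFn_succ, List.prod_cons, contractLeft_ι_mul,
        aux_contract_prod d (fun i => w i.succ) (fun i => hw _), hw 0]
      simp

open CliffordAlgebra in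
/-- `changeForm` sends products of pairwise `B`-orthogonal vectors to the corresponding
products. -/
private lemma aux_changeForm_prod {R M : Type*} [CommRing R] [AddCommGroup M] [Module R M]
    {Q Q' : QuadraticForm R M} {B : LinearMap.BilinForm R M}
    (h : B.toQuadraticMap = Q' - Q) :
    ∀ {k : ℕ} (v : Fin k → M), (∀ i j, i ≠ j → B (v i) (v j) = 0) →
      changeForm h ((List.ofFn fun i => ι Q (v i)).prod)
        = (List.ofFn fun i => ι Q' (v i)).prod
  | 0, v, hv => by
      simp
  | (k + 1), v, hv => by
      rw [List.ofFn_succ, List.prod_cons, changeForm_ι_mul,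
        aux_changeForm_prod h (fun i => v i.succ)
          (fun i j hij => hv _ _ (by simpa using Fin.succ_injective k |>.ne hij)),
        aux_contract_prod (B (v 0)) (fun i => v i.succ)
          (fun i => hv 0 i.succ (Fin.succ_ne_zero i).symm),
        List.ofFn_succ, List.prod_cons]
      simp

/-- A module-valued alternating map of top degree is determined by its value on a basis. -/
private lemma aux_alt_eq_det_smul {R M N : Type*} [CommRing R] [AddCommGroup M] [Module R M]
    [AddCommGroup N] [Module R N] {n : ℕ} (b : Module.Basis (Fin n) R M)
    (g : M [⋀^Fin n]→ₗ[R] N) (v : Fin n → M) :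
    g v = b.det v • g b := by
  have hg : g = (LinearMap.toSpanSingleton R N (g b)).compAlternatingMap b.det := by
    refine b.ext_alternating fun i h => ?_
    let σ : Equiv.Perm (Fin n) := Equiv.ofBijective i (Finite.injective_iff_bijective.1 h)
    have hbi : (fun j => b (i j)) = ⇑b ∘ σ := rfl
    rw [hbi, AlternatingMap.map_perm, LinearMap.compAlternatingMap_apply,
      AlternatingMap.map_perm, Module.Basis.det_self, LinearMap.toSpanSingleton_apply]
    rcases Int.units_eq_one_or (Equiv.Perm.sign σ) with hs | hs <;> simp [hs]
  conv_lhs => rw [hg]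
  simp [LinearMap.toSpanSingleton_apply]

/-- Let `Q` be the quadratic form `Q(v) = -‖v‖²` on Euclidean `ℝⁿ` and let
`(e₁, …, eₙ)`, `(f₁, …, fₙ)` be orthonormal bases whose change-of-basis matrix has
determinant `1` (i.e. they determine the same orientation). Then
`ι(e₁)·…·ι(eₙ) = ι(f₁)·…·ι(fₙ)` in the Clifford algebra of `Q`: the volume element does
not depend on the choice of positively oriented orthonormal basis. -/
theorem volume_element_independent_of_oriented_onb (n : ℕ)
    (Q : QuadraticForm ℝ (EuclideanSpace ℝ (Fin n)))
    (hQ : ∀ v, Q v = -‖v‖ ^ 2)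
    (e f : Fin n → EuclideanSpace ℝ (Fin n))
    (he : Orthonormal ℝ e) (hf : Orthonormal ℝ f)
    (M : Matrix (Fin n) (Fin n) ℝ)
    (hM : ∀ j, f j = ∑ i, M i j • e i)
    (hdet : M.det = 1) :
    (List.ofFn fun i : Fin n => CliffordAlgebra.ι Q (e i)).prod =
      (List.ofFn fun i : Fin n => CliffordAlgebra.ι Q (f i)).prod := by
  haveI : Invertible (2 : ℝ) := invertibleOfNonzero two_ne_zero
  -- the bilinear form underlying `equivExterior`
  set B : LinearMap.BilinForm ℝ (EuclideanSpace ℝ (Fin n)) :=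
    QuadraticMap.associated (R := ℝ) (-Q) with hB
  have horth : ∀ (v : Fin n → EuclideanSpace ℝ (Fin n)), Orthonormal ℝ v →
      ∀ i j, i ≠ j → B (v i) (v j) = 0 := by
    intro v hv i j hij
    have hinner : ⟪v i, v j⟫ = 0 := hv.2 hij
    have key : (-Q) (v i + v j) - (-Q) (v i) - (-Q) (v j) = 0 := by
      simp only [QuadraticMap.neg_apply, hQ]
      rw [norm_add_sq_real, hinner]
      ring
    rw [hB, QuadraticMap.associated_apply, key, smul_zero]
  -- transport to the exterior algebra
  have hmap : ∀ (v : Fin n → EuclideanSpace ℝ (Fin n)), Orthonormal ℝ v →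
      CliffordAlgebra.equivExterior Q ((List.ofFn fun i => CliffordAlgebra.ι Q (v i)).prod)
        = ExteriorAlgebra.ιMulti ℝ n v := by
    intro v hv
    rw [ExteriorAlgebra.ιMulti_apply]
    exact aux_changeForm_prod CliffordAlgebra.changeForm.associated_neg_proof v (horth v hv)
  rcases Nat.eq_zero_or_pos n with rfl | hn
  · simp
  haveI : Nonempty (Fin n) := ⟨⟨0, hn⟩⟩
  apply (CliffordAlgebra.equivExterior Q).injective
  rw [hmap e he, hmap f hf]
  -- the alternating-map / determinant argument
  have hcard : Module.finrank ℝ (EuclideanSpace ℝ (Fin n)) = n := by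
    simp [finrank_euclideanSpace_fin]
  let b : Module.Basis (Fin n) ℝ (EuclideanSpace ℝ (Fin n)) :=
    basisOfLinearIndependentOfCardEqFinrank he.linearIndependent (by simp [hcard])
  have hb : ⇑b = e := coe_basisOfLinearIndependentOfCardEqFinrank _ _
  have hdetf : b.det f = 1 := by
    rw [Module.Basis.det_apply]
    have : b.toMatrix f = M := by
      ext i j
      rw [Module.Basis.toMatrix_apply, hM j]
      simp [← hb, Finsupp.single_apply]
    rw [this, hdet]
  have h1 : ExteriorAlgebra.ιMulti ℝ n f = b.det f • ExteriorAlgebra.ιMulti ℝ n ⇑b :=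
    aux_alt_eq_det_smul b _ f
  rw [h1, hdetf, one_smul, hb]
end

section
/- Fix a real constant c and define, for nonzero x ∈ ℝ⁴ and v ∈ ℝ⁴, the gauge-transformed instanton potential A₂(x)v := (c²/(‖x‖² + c²))·γ(x)·(D(γ⁻¹))(x)v ∈ M₂(ℂ). Then there exists a constant C > 0 such that for all x ∈ ℝ⁴ with ‖x‖ ≥ 1 and all v ∈ ℝ⁴, ‖A₂(x)v‖ ≤ C·‖x‖⁻³·‖v‖; that is, A₂ vanishes as O(r⁻³) at infinity. -/
open Matrix

attribute [local instance] Matrix.linftyOpNormedAddCommGroup Matrix.linftyOpNormedRing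
  Matrix.linftyOpNormedAlgebra

/-- The Pauli matrix σ₁. -/
def pauli1 : Matrix (Fin 2) (Fin 2) ℂ := !![0, 1; 1, 0]

/-- The Pauli matrix σ₂. -/
def pauli2 : Matrix (Fin 2) (Fin 2) ℂ := !![0, -Complex.I; Complex.I, 0]

/-- The Pauli matrix σ₃. -/
def pauli3 : Matrix (Fin 2) (Fin 2) ℂ := !![1, 0; 0, -1]

/-- The map `γ(x) = ‖x‖⁻¹ (x₄ I₂ - i(x₁σ₁ + x₂σ₂ + x₃σ₃))` on `ℝ⁴`. -/
noncomputable def gammaMap (x : EuclideanSpace ℝ (Fin 4)) : Matrix (Fin 2) (Fin 2) ℂ :=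
  ((‖x‖⁻¹ : ℝ) : ℂ) •
    ((x 3 : ℂ) • (1 : Matrix (Fin 2) (Fin 2) ℂ) -
      Complex.I • ((x 0 : ℂ) • pauli1 + (x 1 : ℂ) • pauli2 + (x 2 : ℂ) • pauli3))

/-- The gauge-transformed instanton potential
`A₂(x)v = (c²/(‖x‖² + c²)) · γ(x) · (D(γ⁻¹))(x)v`. -/
noncomputable def instantonPotentialA2 (c : ℝ) (x v : EuclideanSpace ℝ (Fin 4)) :
    Matrix (Fin 2) (Fin 2) ℂ :=
  (c ^ 2 / (‖x‖ ^ 2 + c ^ 2)) •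
    (gammaMap x * fderiv ℝ (fun y => (gammaMap y)⁻¹) x v)

/-! ### Auxiliary material -/

noncomputable instance gammaCLMNormedAddCommGroup :
    NormedAddCommGroup (EuclideanSpace ℝ (Fin 4) →L[ℝ] Matrix (Fin 2) (Fin 2) ℂ) :=
  ContinuousLinearMap.toNormedAddCommGroup

/-- The linear part of `γ`, as a continuous linear map. -/
noncomputable def gammaLin : EuclideanSpace ℝ (Fin 4) →L[ℝ] Matrix (Fin 2) (Fin 2) ℂ :=
  (EuclideanSpace.proj (3 : Fin 4)).smulRight (1 : Matrix (Fin 2) (Fin 2) ℂ)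
    - (EuclideanSpace.proj (0 : Fin 4)).smulRight (Complex.I • pauli1)
    - (EuclideanSpace.proj (1 : Fin 4)).smulRight (Complex.I • pauli2)
    - (EuclideanSpace.proj (2 : Fin 4)).smulRight (Complex.I • pauli3)

/-- The linear part of `γ⁻¹`, as a continuous linear map. -/
noncomputable def gammaLinC : EuclideanSpace ℝ (Fin 4) →L[ℝ] Matrix (Fin 2) (Fin 2) ℂ :=
  (EuclideanSpace.proj (3 : Fin 4)).smulRight (1 : Matrix (Fin 2) (Fin 2) ℂ)
    + (EuclideanSpace.proj (0 : Fin 4)).smulRight (Complex.I • pauli1)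
    + (EuclideanSpace.proj (1 : Fin 4)).smulRight (Complex.I • pauli2)
    + (EuclideanSpace.proj (2 : Fin 4)).smulRight (Complex.I • pauli3)

lemma gammaMap_eq (x : EuclideanSpace ℝ (Fin 4)) :
    gammaMap x = ‖x‖⁻¹ • gammaLin x := by
  rw [gammaMap, Complex.coe_smul]
  congr 1
  simp only [gammaLin, ContinuousLinearMap.sub_apply, ContinuousLinearMap.smulRight_apply,
    PiLp.proj_apply]
  ext i j
  fin_cases i <;> fin_cases j <;>
    simp [pauli1, pauli2, pauli3, Matrix.one_apply] <;> ring_nf <;>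
    simp [Complex.ext_iff]

lemma gammaLin_mul_gammaLinC (x : EuclideanSpace ℝ (Fin 4)) :
    gammaLin x * gammaLinC x
      = (((x 0) ^ 2 + (x 1) ^ 2 + (x 2) ^ 2 + (x 3) ^ 2 : ℝ) : ℂ) • 1 := by
  simp only [gammaLin, gammaLinC, ContinuousLinearMap.sub_apply, ContinuousLinearMap.add_apply,
    ContinuousLinearMap.smulRight_apply, PiLp.proj_apply]
  ext i j
  fin_cases i <;> fin_cases j <;>
    simp [pauli1, pauli2, pauli3, Matrix.mul_apply, Fin.sum_univ_succ, Matrix.one_apply] <;>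
    ring_nf <;> simp [Complex.ext_iff] <;> constructor <;> ring

lemma norm_sq_eq (x : EuclideanSpace ℝ (Fin 4)) :
    ‖x‖ ^ 2 = (x 0) ^ 2 + (x 1) ^ 2 + (x 2) ^ 2 + (x 3) ^ 2 := by
  rw [EuclideanSpace.norm_eq, Real.sq_sqrt (by positivity)]
  simp [Fin.sum_univ_four, sq_abs]

lemma gammaMap_inv (x : EuclideanSpace ℝ (Fin 4)) :
    (gammaMap x)⁻¹ = ‖x‖⁻¹ • gammaLinC x := by
  rcases eq_or_ne x 0 with rfl | hx
  · rw [gammaMap_eq]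
    simp [Matrix.inv_zero]
  · apply Matrix.inv_eq_right_inv
    have hn : ‖x‖ ≠ 0 := norm_ne_zero_iff.2 hx
    rw [gammaMap_eq, smul_mul_smul_comm, gammaLin_mul_gammaLinC, Complex.coe_smul, smul_smul,
      ← norm_sq_eq]
    rw [show ‖x‖⁻¹ * ‖x‖⁻¹ * ‖x‖ ^ 2 = 1 by field_simp]
    exact one_smul _ _

lemma norm_fderiv_inv_norm_le (x : EuclideanSpace ℝ (Fin 4)) (hx : x ≠ 0) :
    ‖fderiv ℝ (fun y : EuclideanSpace ℝ (Fin 4) => ‖y‖⁻¹) x‖ ≤ (‖x‖ ^ 2)⁻¹ := by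
  have hn : ‖x‖ ≠ 0 := norm_ne_zero_iff.2 hx
  have h1 : DifferentiableAt ℝ (fun y : EuclideanSpace ℝ (Fin 4) => ‖y‖) x :=
    differentiableAt_id.norm ℝ hx
  have h2 := h1.hasFDerivAt
  have h3 : HasFDerivAt (fun t : ℝ => t⁻¹)
      (-(ContinuousLinearMap.mulLeftRight ℝ ℝ ‖x‖⁻¹ ‖x‖⁻¹)) ‖x‖ := hasFDerivAt_inv' hn
  have h4 := h3.comp x h2
  have h5 : (fun y : EuclideanSpace ℝ (Fin 4) => ‖y‖⁻¹) = (fun t : ℝ => t⁻¹) ∘ norm := rfl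
  rw [h5, h4.fderiv]
  calc ‖(-(ContinuousLinearMap.mulLeftRight ℝ ℝ ‖x‖⁻¹ ‖x‖⁻¹)).comp
        (fderiv ℝ (fun y : EuclideanSpace ℝ (Fin 4) => ‖y‖) x)‖
      ≤ ‖-(ContinuousLinearMap.mulLeftRight ℝ ℝ ‖x‖⁻¹ ‖x‖⁻¹)‖ *
        ‖fderiv ℝ (fun y : EuclideanSpace ℝ (Fin 4) => ‖y‖) x‖ :=
        ContinuousLinearMap.opNorm_comp_le _ _
    _ ≤ (‖x‖⁻¹ * ‖x‖⁻¹) * 1 := by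
        apply mul_le_mul
        · rw [norm_neg]
          calc ‖ContinuousLinearMap.mulLeftRight ℝ ℝ ‖x‖⁻¹ ‖x‖⁻¹‖
              ≤ ‖(‖x‖⁻¹ : ℝ)‖ * ‖(‖x‖⁻¹ : ℝ)‖ :=
                ContinuousLinearMap.opNorm_mulLeftRight_apply_apply_le ℝ ℝ _ _
            _ = ‖x‖⁻¹ * ‖x‖⁻¹ := by
                rw [Real.norm_eq_abs, abs_of_nonneg (by positivity)]
        · have := norm_fderiv_le_of_lipschitz (𝕜 := ℝ)
            (f := fun y : EuclideanSpace ℝ (Fin 4) => ‖y‖) (x₀ := x) lipschitzWith_one_norm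
          simpa using this
        · exact norm_nonneg _
        · positivity
    _ = (‖x‖ ^ 2)⁻¹ := by rw [mul_one, sq, mul_inv]
  
lemma hasFDerivAt_gammaMap_inv (x : EuclideanSpace ℝ (Fin 4)) (hx : x ≠ 0) :
    HasFDerivAt (fun y => (gammaMap y)⁻¹)
      (‖x‖⁻¹ • (gammaLinC : EuclideanSpace ℝ (Fin 4) →L[ℝ] Matrix (Fin 2) (Fin 2) ℂ)
        + (fderiv ℝ (fun y : EuclideanSpace ℝ (Fin 4) => ‖y‖⁻¹) x).smulRight (gammaLinC x)) x := by
  have h : (fun y => (gammaMap y)⁻¹)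
      = fun y : EuclideanSpace ℝ (Fin 4) => ‖y‖⁻¹ • gammaLinC y := funext gammaMap_inv
  rw [h]
  have hnorm : DifferentiableAt ℝ (fun y : EuclideanSpace ℝ (Fin 4) => ‖y‖⁻¹) x :=
    (differentiableAt_id.norm ℝ hx).inv (norm_ne_zero_iff.2 hx)
  exact hnorm.hasFDerivAt.smul gammaLinC.hasFDerivAt

lemma fderiv_gammaMap_inv_bound (x v : EuclideanSpace ℝ (Fin 4)) (hx : 1 ≤ ‖x‖) :
    ‖fderiv ℝ (fun y => (gammaMap y)⁻¹) x v‖ ≤ 2 * ‖gammaLinC‖ * (‖x‖⁻¹ * ‖v‖) := by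
  have hx0 : x ≠ 0 := by
    intro h; rw [h, norm_zero] at hx; linarith
  have hn : (0:ℝ) < ‖x‖ := lt_of_lt_of_le one_pos hx
  rw [(hasFDerivAt_gammaMap_inv x hx0).fderiv]
  set g' := fderiv ℝ (fun y : EuclideanSpace ℝ (Fin 4) => ‖y‖⁻¹) x
  calc ‖(‖x‖⁻¹ • (gammaLinC : EuclideanSpace ℝ (Fin 4) →L[ℝ] Matrix (Fin 2) (Fin 2) ℂ)
        + g'.smulRight (gammaLinC x)) v‖
      = ‖‖x‖⁻¹ • gammaLinC v + g' v • gammaLinC x‖ := by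
        simp [ContinuousLinearMap.add_apply, ContinuousLinearMap.smul_apply,
          ContinuousLinearMap.smulRight_apply]
    _ ≤ ‖‖x‖⁻¹ • gammaLinC v‖ + ‖g' v • gammaLinC x‖ := norm_add_le _ _
    _ ≤ ‖x‖⁻¹ * (‖gammaLinC‖ * ‖v‖) + (‖x‖ ^ 2)⁻¹ * ‖v‖ * (‖gammaLinC‖ * ‖x‖) := by
        have hA : ‖‖x‖⁻¹ • gammaLinC v‖ ≤ ‖x‖⁻¹ * (‖gammaLinC‖ * ‖v‖) := by
          rw [norm_smul, Real.norm_eq_abs, abs_of_nonneg (by positivity)]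
          exact mul_le_mul_of_nonneg_left (gammaLinC.le_opNorm v) (by positivity)
        have hB : ‖g' v • gammaLinC x‖ ≤ (‖x‖ ^ 2)⁻¹ * ‖v‖ * (‖gammaLinC‖ * ‖x‖) := by
          rw [norm_smul]
          have h1 : ‖g' v‖ ≤ (‖x‖ ^ 2)⁻¹ * ‖v‖ :=
            le_trans (g'.le_opNorm v)
              (mul_le_mul_of_nonneg_right (norm_fderiv_inv_norm_le x hx0) (norm_nonneg _))
          exact mul_le_mul h1 (gammaLinC.le_opNorm x) (norm_nonneg _) (by positivity)
        linarith
    _ = 2 * ‖gammaLinC‖ * (‖x‖⁻¹ * ‖v‖) := by field_simp; ring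

lemma gammaMap_norm_le (x : EuclideanSpace ℝ (Fin 4)) (hx : x ≠ 0) :
    ‖gammaMap x‖ ≤ ‖gammaLin‖ := by
  have hn : (0:ℝ) < ‖x‖ := norm_pos_iff.2 hx
  rw [gammaMap_eq, norm_smul, Real.norm_eq_abs, abs_of_nonneg (by positivity)]
  calc ‖x‖⁻¹ * ‖gammaLin x‖ ≤ ‖x‖⁻¹ * (‖gammaLin‖ * ‖x‖) := by
        exact mul_le_mul_of_nonneg_left (gammaLin.le_opNorm x) (by positivity)
    _ = ‖gammaLin‖ := by field_simp

/-- The gauge-transformed instanton potential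
`A₂(x)v = (c²/(‖x‖² + c²))·γ(x)·(D(γ⁻¹))(x)v` vanishes as `O(r⁻³)` at infinity: there is
`C > 0` with `‖A₂(x)v‖ ≤ C·‖x‖⁻³·‖v‖` for all `‖x‖ ≥ 1` and all `v`. -/
theorem instantonPotentialA2_decay (c : ℝ) :
    ∃ C > 0, ∀ (x v : EuclideanSpace ℝ (Fin 4)), 1 ≤ ‖x‖ →
      ‖instantonPotentialA2 c x v‖ ≤ C * ‖x‖⁻¹ ^ 3 * ‖v‖ := by
  refine ⟨c ^ 2 * (‖gammaLin‖ * (2 * ‖gammaLinC‖)) + 1, by positivity, fun x v hx => ?_⟩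
  have hx0 : x ≠ 0 := by intro h; rw [h, norm_zero] at hx; linarith
  have hn : (0:ℝ) < ‖x‖ := lt_of_lt_of_le one_pos hx
  have hden : (0:ℝ) < ‖x‖ ^ 2 + c ^ 2 := by positivity
  have hs : c ^ 2 / (‖x‖ ^ 2 + c ^ 2) ≤ c ^ 2 / ‖x‖ ^ 2 := by
    apply div_le_div_of_nonneg_left (by positivity) (by positivity)
    linarith [sq_nonneg c]
  have hsnn : (0:ℝ) ≤ c ^ 2 / (‖x‖ ^ 2 + c ^ 2) := by positivity
  rw [instantonPotentialA2, norm_smul, Real.norm_eq_abs, abs_of_nonneg hsnn]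
  calc (c ^ 2 / (‖x‖ ^ 2 + c ^ 2)) * ‖gammaMap x * fderiv ℝ (fun y => (gammaMap y)⁻¹) x v‖
      ≤ (c ^ 2 / ‖x‖ ^ 2) * (‖gammaMap x‖ * ‖fderiv ℝ (fun y => (gammaMap y)⁻¹) x v‖) := by
        apply mul_le_mul hs (norm_mul_le _ _) (norm_nonneg _) (by positivity)
    _ ≤ (c ^ 2 / ‖x‖ ^ 2) * (‖gammaLin‖ * (2 * ‖gammaLinC‖ * (‖x‖⁻¹ * ‖v‖))) := by
        gcongr
        · exact gammaMap_norm_le x hx0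
        · exact fderiv_gammaMap_inv_bound x v hx
    _ = c ^ 2 * (‖gammaLin‖ * (2 * ‖gammaLinC‖)) * ‖x‖⁻¹ ^ 3 * ‖v‖ := by
        field_simp
    _ ≤ (c ^ 2 * (‖gammaLin‖ * (2 * ‖gammaLinC‖)) + 1) * ‖x‖⁻¹ ^ 3 * ‖v‖ := by
        have : (0:ℝ) ≤ ‖x‖⁻¹ ^ 3 * ‖v‖ := by positivity
        nlinarith
end
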